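/- Let n ≥ 1, let F be an upper triangular invertible n×n complex matrix, let ψ ∈ ℂⁿ be a column vector, and let Σ be an n×n complex matrix with Σ + Σᵀ = −ψ·ψᵀ. Form the (1+n+n)×(1+n+n) block matrix x = [[1, ψᵀ, 0], [0, (F⁻¹)ᵀ, 0], [−F·ψ, F·Σ, F]]. Then the following are equivalent: (i) there exist upper triangular invertible n×n matrices X and U, vectors γ, c ∈ ℂⁿ, and n×n matrices A and S with A + Aᵀ = −γ·γᵀ and S + Sᵀ = −c·cᵀ, such that x = [[1, 0, γᵀ], [−X·γ, X, X·A], [0, 0, (Xᵀ)⁻¹]] * [[(−1)ⁿ, 0, 0], [0, 0, Iₙ], [0, Iₙ, 0]] * [[1, 0, cᵀ], [−U·c, U, U·S], [0, 0, (Uᵀ)⁻¹]]; (ii) there exist a lower triangular invertible matrix L and an upper triangular invertible matrix U′ with F·Σ = L·U′, and moreover Σ is invertible with ψᵀ·Σ⁻¹·ψ = (−1)ⁿ − 1 (as a scalar). -/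

import Mathlib

open Matrix

/-- A row vector as a `1 × n` matrix. -/
def rowV {n : ℕ} (v : Fin n → ℂ) : Matrix (Fin 1) (Fin n) ℂ :=
  Matrix.of fun _ j => v j

/-- A column vector as an `n × 1` matrix. -/
def colV {n : ℕ} (v : Fin n → ℂ) : Matrix (Fin n) (Fin 1) ℂ :=
  Matrix.of fun i _ => v i

/-- A `(1+n+n) × (1+n+n)` matrix built from a `3 × 3` array of blocks. -/
def blk3 {n : ℕ} (a : Matrix (Fin 1) (Fin 1) ℂ) (b c : Matrix (Fin 1) (Fin n) ℂ)
    (d : Matrix (Fin n) (Fin 1) ℂ) (e f : Matrix (Fin n) (Fin n) ℂ)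
    (g : Matrix (Fin n) (Fin 1) ℂ) (h k : Matrix (Fin n) (Fin n) ℂ) :
    Matrix (Fin 1 ⊕ (Fin n ⊕ Fin n)) (Fin 1 ⊕ (Fin n ⊕ Fin n)) ℂ :=
  fromBlocks a (fromCols b c) (fromRows d g) (fromBlocks e f h k)

lemma fromColumns_add' {R m n₁ n₂ : Type*} [Add R] (a b : Matrix m n₁ R) (c d : Matrix m n₂ R) :
    fromCols a c + fromCols b d = fromCols (a + b) (c + d) := by
  ext i j; cases j <;> simp

lemma fromRows_add' {R m₁ m₂ n : Type*} [Add R] (a b : Matrix m₁ n R) (c d : Matrix m₂ n R) :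
    fromRows a c + fromRows b d = fromRows (a + b) (c + d) := by
  ext i j; cases i <;> simp

lemma blk3_mul {n : ℕ} (a : Matrix (Fin 1) (Fin 1) ℂ) (b c : Matrix (Fin 1) (Fin n) ℂ)
    (d : Matrix (Fin n) (Fin 1) ℂ) (e f : Matrix (Fin n) (Fin n) ℂ)
    (g : Matrix (Fin n) (Fin 1) ℂ) (h k : Matrix (Fin n) (Fin n) ℂ)
    (a' : Matrix (Fin 1) (Fin 1) ℂ) (b' c' : Matrix (Fin 1) (Fin n) ℂ)
    (d' : Matrix (Fin n) (Fin 1) ℂ) (e' f' : Matrix (Fin n) (Fin n) ℂ)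
    (g' : Matrix (Fin n) (Fin 1) ℂ) (h' k' : Matrix (Fin n) (Fin n) ℂ) :
    blk3 a b c d e f g h k * blk3 a' b' c' d' e' f' g' h' k' =
    blk3 (a*a'+(b*d'+c*g')) (a*b'+(b*e'+c*h')) (a*c'+(b*f'+c*k'))
      (d*a'+(e*d'+f*g')) (d*b'+(e*e'+f*h')) (d*c'+(e*f'+f*k'))
      (g*a'+(h*d'+k*g')) (g*b'+(h*e'+k*h')) (g*c'+(h*f'+k*k')) := by
  simp only [blk3, fromBlocks_multiply, fromCols_mul_fromRows, fromCols_mul_fromBlocks,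
    mul_fromCols, fromRows_mul_fromCols, fromBlocks_mul_fromRows, fromRows_mul,
    fromBlocks_multiply, fromColumns_add', fromRows_add',
    fromCols_fromRows_eq_fromBlocks, fromBlocks_add]

lemma blk3_inj {n : ℕ} {a a' : Matrix (Fin 1) (Fin 1) ℂ} {b c b' c' : Matrix (Fin 1) (Fin n) ℂ}
    {d d' : Matrix (Fin n) (Fin 1) ℂ} {e f e' f' : Matrix (Fin n) (Fin n) ℂ}
    {g g' : Matrix (Fin n) (Fin 1) ℂ} {h k h' k' : Matrix (Fin n) (Fin n) ℂ}
    (H : blk3 a b c d e f g h k = blk3 a' b' c' d' e' f' g' h' k') :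
    a = a' ∧ b = b' ∧ c = c' ∧ d = d' ∧ e = e' ∧ f = f' ∧ g = g' ∧ h = h' ∧ k = k' := by
  simp only [blk3, fromBlocks_inj] at H
  obtain ⟨h1, h2, h3, h4⟩ := H
  obtain ⟨h2a, h2b⟩ := fromCols_inj h2
  obtain ⟨h3a, h3b⟩ := fromRows_inj h3
  tauto

lemma blk3_congr {n : ℕ} {a a' : Matrix (Fin 1) (Fin 1) ℂ} {b c b' c' : Matrix (Fin 1) (Fin n) ℂ}
    {d d' : Matrix (Fin n) (Fin 1) ℂ} {e f e' f' : Matrix (Fin n) (Fin n) ℂ}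
    {g g' : Matrix (Fin n) (Fin 1) ℂ} {h k h' k' : Matrix (Fin n) (Fin n) ℂ}
    (h1 : a = a') (h2 : b = b') (h3 : c = c') (h4 : d = d') (h5 : e = e') (h6 : f = f')
    (h7 : g = g') (h8 : h = h') (h9 : k = k') :
    blk3 a b c d e f g h k = blk3 a' b' c' d' e' f' g' h' k' := by
  subst h1 h2 h3 h4 h5 h6 h7 h8 h9; rfl

lemma colV_inj {n : ℕ} {u v : Fin n → ℂ} (h : colV u = colV v) : u = v :=
  funext fun i => congrFun (congrFun h i) 0

lemma mul_colV {n : ℕ} (M : Matrix (Fin n) (Fin n) ℂ) (v : Fin n → ℂ) :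
    M * colV v = colV (M.mulVec v) := by
  ext i j; simp [colV, mul_apply, mulVec, dotProduct]

lemma colV_neg {n : ℕ} (v : Fin n → ℂ) : colV (-v) = -colV v := by
  ext i j; simp [colV]

lemma transpose_colV {n : ℕ} (v : Fin n → ℂ) : (colV v)ᵀ = rowV v := rfl

lemma rowV_mul_colV {n : ℕ} (u v : Fin n → ℂ) :
    rowV u * colV v = (u ⬝ᵥ v) • (1 : Matrix (Fin 1) (Fin 1) ℂ) := by
  ext i j
  fin_cases i; fin_cases j
  simp [rowV, colV, mul_apply, dotProduct]

lemma colV_mul_rowV {n : ℕ} (u v : Fin n → ℂ) :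
    colV u * rowV v = vecMulVec u v := by
  ext i j; simp [rowV, colV, mul_apply, vecMulVec, Fin.sum_univ_one]

lemma smul_one_11 {s t : ℂ}
    (h : (s • 1 : Matrix (Fin 1) (Fin 1) ℂ) = t • 1) : s = t := by
  have := congrFun (congrFun h 0) 0
  simpa using this

lemma upper_inv {n : ℕ} {M : Matrix (Fin n) (Fin n) ℂ} (h : IsUnit M.det)
    (hM : ∀ i j : Fin n, j < i → M i j = 0) : ∀ i j : Fin n, j < i → M⁻¹ i j = 0 := by
  haveI := M.invertibleOfIsUnitDet h
  have : BlockTriangular M (id : Fin n → Fin n) := fun i j hij => hM i j hij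
  have h2 := blockTriangular_inv_of_blockTriangular this
  exact fun i j hij => h2 hij
/-- Remark "bigcell" of the paper, odd orthogonal case: the element
`x = [[1, ψᵀ, 0], [0, (F⁻¹)ᵀ, 0], [−Fψ, FΣ, F]]` of the opposite Borel of
`SO(2n+1,ℂ)` lies in the cell `B·ẇ₀·B` if and only if `FΣ` lies in the big cell
of `GL_n(ℂ)` and `ψᵀΣ⁻¹ψ = (−1)ⁿ − 1`. -/
theorem bigcell_odd_orthogonal (n : ℕ) (hn : 1 ≤ n)
    (F : Matrix (Fin n) (Fin n) ℂ) (ψ : Fin n → ℂ) (S : Matrix (Fin n) (Fin n) ℂ)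
    (hF_upper : ∀ i j : Fin n, j < i → F i j = 0) (hF_unit : IsUnit F)
    (hS : S + Sᵀ = -(vecMulVec ψ ψ)) :
    (∃ X U : Matrix (Fin n) (Fin n) ℂ, ∃ γ c : Fin n → ℂ,
      ∃ A S' : Matrix (Fin n) (Fin n) ℂ,
        (∀ i j : Fin n, j < i → X i j = 0) ∧ IsUnit X ∧
        (∀ i j : Fin n, j < i → U i j = 0) ∧ IsUnit U ∧
        A + Aᵀ = -(vecMulVec γ γ) ∧ S' + S'ᵀ = -(vecMulVec c c) ∧
        blk3 1 (rowV ψ) 0 0 (F⁻¹)ᵀ 0 (colV (-(F.mulVec ψ))) (F * S) F =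
          blk3 1 0 (rowV γ) (colV (-(X.mulVec γ))) X (X * A) 0 0 (Xᵀ)⁻¹ *
            blk3 (((-1 : ℂ) ^ n) • 1) 0 0 0 0 1 0 1 0 *
            blk3 1 0 (rowV c) (colV (-(U.mulVec c))) U (U * S') 0 0 (Uᵀ)⁻¹) ↔
    ((∃ L U' : Matrix (Fin n) (Fin n) ℂ,
        (∀ i j : Fin n, i < j → L i j = 0) ∧ IsUnit L ∧
        (∀ i j : Fin n, j < i → U' i j = 0) ∧ IsUnit U' ∧
        F * S = L * U') ∧
      IsUnit S ∧ ψ ⬝ᵥ S⁻¹.mulVec ψ = (-1 : ℂ) ^ n - 1) := by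
  have dF : IsUnit F.det := (Matrix.isUnit_iff_isUnit_det F).mp hF_unit
  constructor
  · rintro ⟨X, U, γ, c, A, S', hXu, hXunit, hUu, hUunit, hA, hS', hx⟩
    have dX : IsUnit X.det := (Matrix.isUnit_iff_isUnit_det X).mp hXunit
    have dU : IsUnit U.det := (Matrix.isUnit_iff_isUnit_det U).mp hUunit
    have dXT : IsUnit Xᵀ.det := by rwa [Matrix.det_transpose]
    rw [blk3_mul, blk3_mul] at hx
    obtain ⟨Ea, Eb, _Ec, _Ed, _Ee, _Ef, Eg, Eh, Ei⟩ := blk3_inj hx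
    simp only [Matrix.mul_zero, Matrix.zero_mul, add_zero, zero_add, Matrix.mul_one,
      Matrix.one_mul] at Ea Eb Eg Eh Ei
    -- Eh : F * S = (Xᵀ)⁻¹ * U
    -- Ei : F = (Xᵀ)⁻¹ * (U * S')
    have hLunit : IsUnit (Xᵀ)⁻¹ := by
      rw [Matrix.isUnit_nonsing_inv_iff, Matrix.isUnit_iff_isUnit_det]; exact dXT
    have hFS_unit : IsUnit (F * S) := by rw [Eh]; exact hLunit.mul hUunit
    have hSunit : IsUnit S := by
      rw [Matrix.isUnit_iff_isUnit_det]
      have := (Matrix.isUnit_iff_isUnit_det _).mp hFS_unit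
      rw [Matrix.det_mul] at this
      exact isUnit_of_mul_isUnit_right this
    have dS : IsUnit S.det := (Matrix.isUnit_iff_isUnit_det S).mp hSunit
    -- S' = S⁻¹
    have hFSS' : F * (S * S') = F := by
      rw [← Matrix.mul_assoc, Eh, Matrix.mul_assoc, ← Ei]
    have hSS' : S * S' = 1 := by
      have := congrArg (fun M => F⁻¹ * M) hFSS'
      simpa [← Matrix.mul_assoc, Matrix.nonsing_inv_mul F dF] using this
    have hS'inv : S⁻¹ = S' := Matrix.inv_eq_right_inv hSS'
    -- c = S⁻¹ ψ
    have hEg : F * colV ψ = (Xᵀ)⁻¹ * (U * colV c) := by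
      have : -(F * colV ψ) = -((Xᵀ)⁻¹ * (U * colV c)) := by
        calc -(F * colV ψ) = colV (-(F.mulVec ψ)) := by rw [mul_colV, colV_neg]
        _ = (Xᵀ)⁻¹ * colV (-(U.mulVec c)) := Eg
        _ = -((Xᵀ)⁻¹ * (U * colV c)) := by rw [colV_neg, mul_colV, Matrix.mul_neg]
      exact neg_injective this
    have hcolc : colV ψ = S * colV c := by
      have h2 : F * colV ψ = F * (S * colV c) := by
        rw [hEg, ← Matrix.mul_assoc, ← Eh, Matrix.mul_assoc]
      have := congrArg (fun M => F⁻¹ * M) h2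
      simpa [← Matrix.mul_assoc, Matrix.nonsing_inv_mul F dF] using this
    have hψ : ψ = S.mulVec c := colV_inj (by rw [hcolc, mul_colV])
    have hc : S⁻¹.mulVec ψ = c := by
      rw [hψ, Matrix.mulVec_mulVec, Matrix.nonsing_inv_mul S dS, Matrix.one_mulVec]
    -- scalar condition from Ea, Eb
    have hdot : ψ ⬝ᵥ c = (-1 : ℂ) ^ n - 1 := by
      have hEa : (1 : Matrix (Fin 1) (Fin 1) ℂ)
          = (-1 : ℂ) ^ n • 1 - (ψ ⬝ᵥ c) • 1 := by
        calc (1 : Matrix (Fin 1) (Fin 1) ℂ)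
            = ((-1 : ℂ) ^ n) • 1 + rowV γ * colV (-(U.mulVec c)) := Ea
          _ = ((-1 : ℂ) ^ n) • 1 - rowV γ * U * colV c := by
              rw [colV_neg, Matrix.mul_neg, ← mul_colV, Matrix.mul_assoc]
              ring_nf
              rw [sub_eq_add_neg]
          _ = ((-1 : ℂ) ^ n) • 1 - rowV ψ * colV c := by rw [← Eb]
          _ = ((-1 : ℂ) ^ n) • 1 - (ψ ⬝ᵥ c) • 1 := by rw [rowV_mul_colV]
      have h1 : ((1 : ℂ) • 1 : Matrix (Fin 1) (Fin 1) ℂ)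
          = ((-1 : ℂ) ^ n - (ψ ⬝ᵥ c)) • 1 := by
        rw [one_smul, sub_smul] at *
        exact hEa
      have := smul_one_11 h1
      linear_combination this
    refine ⟨⟨(Xᵀ)⁻¹, U, ?_, hLunit, hUu, hUunit, Eh⟩, hSunit, by rw [hc]; exact hdot⟩
    · intro i j hij
      rw [← Matrix.transpose_nonsing_inv]
      exact upper_inv dX hXu j i hij
  · rintro ⟨⟨L, U, hL, hLunit, hUu, hUunit, hLU⟩, hSunit, hscalar⟩
    have dL : IsUnit L.det := (Matrix.isUnit_iff_isUnit_det L).mp hLunit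
    have dU : IsUnit U.det := (Matrix.isUnit_iff_isUnit_det U).mp hUunit
    have dS : IsUnit S.det := (Matrix.isUnit_iff_isUnit_det S).mp hSunit
    have dLT : IsUnit Lᵀ.det := by rwa [Matrix.det_transpose]
    have dUT : IsUnit Uᵀ.det := by rwa [Matrix.det_transpose]
    have dST : IsUnit Sᵀ.det := by rwa [Matrix.det_transpose]
    have hXT : (((Lᵀ)⁻¹)ᵀ)⁻¹ = L := by
      rw [Matrix.transpose_nonsing_inv, Matrix.transpose_transpose,
        Matrix.nonsing_inv_nonsing_inv L dL]
    have hUTT : ((Uᵀ)⁻¹)ᵀ = U⁻¹ := by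
      rw [Matrix.transpose_nonsing_inv, Matrix.transpose_transpose]
    have rowγ : rowV ((Uᵀ)⁻¹.mulVec ψ) = rowV ψ * U⁻¹ := by
      rw [← transpose_colV, ← mul_colV, Matrix.transpose_mul, transpose_colV, hUTT]
    have rowc : rowV (S⁻¹.mulVec ψ) = rowV ψ * (Sᵀ)⁻¹ := by
      rw [← transpose_colV, ← mul_colV, Matrix.transpose_mul, transpose_colV,
        ← Matrix.transpose_nonsing_inv]
    have hadd : Sᵀ + S = -(colV ψ * rowV ψ) := by
      rw [colV_mul_rowV, add_comm]; exact hS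
    have hSt : Sᵀ = -S - colV ψ * rowV ψ := by
      have h : Sᵀ + S = -(vecMulVec ψ ψ) := by rw [add_comm]; exact hS
      calc Sᵀ = -(vecMulVec ψ ψ) - S := eq_sub_of_add_eq h
        _ = -S - colV ψ * rowV ψ := by rw [colV_mul_rowV]; abel
    have key1' : rowV ψ * S⁻¹ * colV ψ = ((-1 : ℂ) ^ n - 1) • 1 := by
      rw [Matrix.mul_assoc, mul_colV, rowV_mul_colV, hscalar]
    have keyc : ((-1 : ℂ) ^ n) • (rowV ψ * (Sᵀ)⁻¹) + rowV ψ * S⁻¹ = 0 := by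
      have hm : (((-1 : ℂ) ^ n) • (rowV ψ * (Sᵀ)⁻¹) + rowV ψ * S⁻¹) * Sᵀ = 0 := by
        rw [Matrix.add_mul, Matrix.smul_mul, Matrix.mul_assoc (rowV ψ),
          Matrix.nonsing_inv_mul _ dST, Matrix.mul_one, hSt, Matrix.mul_sub,
          Matrix.mul_neg, Matrix.mul_assoc (rowV ψ), Matrix.nonsing_inv_mul _ dS,
          Matrix.mul_one, ← Matrix.mul_assoc, key1', Matrix.smul_mul, Matrix.one_mul]
        module
      have := congrArg (fun M => M * (Sᵀ)⁻¹) hm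
      simpa [Matrix.mul_assoc, Matrix.mul_nonsing_inv _ dST] using this
    have keyc2 : rowV ψ * S⁻¹ = -(((-1 : ℂ) ^ n) • (rowV ψ * (Sᵀ)⁻¹)) :=
      by have h := keyc; rw [add_comm] at h; exact eq_neg_of_add_eq_zero_left h
    have keyd : Sᵀ * (S⁻¹ * colV ψ) = -(((-1 : ℂ) ^ n) • colV ψ) := by
      rw [hSt, Matrix.sub_mul, Matrix.neg_mul, ← Matrix.mul_assoc S,
        Matrix.mul_nonsing_inv _ dS, Matrix.one_mul, Matrix.mul_assoc (colV ψ),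
        ← Matrix.mul_assoc (rowV ψ), key1', Matrix.mul_smul, Matrix.mul_one]
      module
    have keyf : Sᵀ * S⁻¹ = -1 - colV ψ * (rowV ψ * S⁻¹) := by
      rw [hSt, Matrix.sub_mul, Matrix.neg_mul, Matrix.mul_nonsing_inv _ dS, Matrix.mul_assoc]
    have canc : ∀ (V : Matrix (Fin n) (Fin n) ℂ), IsUnit V.det →
        ∀ {p : Type} (M : Matrix (Fin n) p ℂ), V⁻¹ * (V * M) = M := by
      intro V dV p M
      rw [← Matrix.mul_assoc, Matrix.nonsing_inv_mul _ dV, Matrix.one_mul]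
    have canc' : ∀ (V : Matrix (Fin n) (Fin n) ℂ), IsUnit V.det →
        ∀ {p : Type} (M : Matrix (Fin n) p ℂ), V * (V⁻¹ * M) = M := by
      intro V dV p M
      rw [← Matrix.mul_assoc, Matrix.mul_nonsing_inv _ dV, Matrix.one_mul]
    have cancelU : ∀ {p : Type} (M : Matrix (Fin n) p ℂ),
        rowV ψ * U⁻¹ * (U * M) = rowV ψ * M := by
      intro p M
      rw [Matrix.mul_assoc (rowV ψ), canc U dU]
    have hsft : Sᵀ * Fᵀ = Uᵀ * Lᵀ := by
      rw [← Matrix.transpose_mul, ← Matrix.transpose_mul, hLU]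
    refine ⟨(Lᵀ)⁻¹, U, (Uᵀ)⁻¹.mulVec ψ, S⁻¹.mulVec ψ, (Uᵀ)⁻¹ * Sᵀ * U⁻¹, S⁻¹,
      ?_, ?_, hUu, hUunit, ?_, ?_, ?_⟩
    · exact fun i j hij => upper_inv dLT (fun i j h => hL j i h) i j hij
    · exact Matrix.isUnit_nonsing_inv_iff.mpr ((Matrix.isUnit_iff_isUnit_det _).mpr dLT)
    · -- A + Aᵀ = -vecMulVec γ γ
      have hAt : ((Uᵀ)⁻¹ * Sᵀ * U⁻¹)ᵀ = (Uᵀ)⁻¹ * (S * U⁻¹) := by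
        rw [Matrix.transpose_mul, Matrix.transpose_mul, Matrix.transpose_transpose,
          hUTT, Matrix.transpose_nonsing_inv]
      rw [← colV_mul_rowV, ← mul_colV, rowγ, hAt, Matrix.mul_assoc ((Uᵀ)⁻¹),
        ← Matrix.mul_add, ← Matrix.add_mul, hadd]
      simp only [Matrix.neg_mul, Matrix.mul_neg, Matrix.mul_assoc]
    · -- S' + S'ᵀ = -vecMulVec c c
      have e1 : S⁻¹ * ((Sᵀ + S) * (Sᵀ)⁻¹) = S⁻¹ + (Sᵀ)⁻¹ := by
        rw [Matrix.add_mul, Matrix.mul_nonsing_inv _ dST, Matrix.mul_add, Matrix.mul_one,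
          ← Matrix.mul_assoc, Matrix.nonsing_inv_mul _ dS, Matrix.one_mul, add_comm]
      calc S⁻¹ + (S⁻¹)ᵀ = S⁻¹ + (Sᵀ)⁻¹ := by rw [Matrix.transpose_nonsing_inv]
        _ = S⁻¹ * ((Sᵀ + S) * (Sᵀ)⁻¹) := e1.symm
        _ = -vecMulVec (S⁻¹.mulVec ψ) (S⁻¹.mulVec ψ) := by
            rw [hadd, ← colV_mul_rowV, ← mul_colV, rowc]
            simp only [Matrix.neg_mul, Matrix.mul_neg, Matrix.mul_assoc]
    · -- big equality
      rw [blk3_mul, blk3_mul]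
      simp only [Matrix.mul_zero, Matrix.zero_mul, add_zero, zero_add, Matrix.mul_one,
        Matrix.one_mul]
      refine blk3_congr ?_ ?_ ?_ ?_ ?_ ?_ ?_ ?_ ?_
      · -- G1
        simp only [colV_neg, ← mul_colV, rowγ, Matrix.mul_neg]
        rw [cancelU, ← Matrix.mul_assoc, key1']
        module
      · -- G2
        rw [rowγ, Matrix.mul_assoc, Matrix.nonsing_inv_mul _ dU, Matrix.mul_one]
      · -- G3
        rw [Matrix.smul_mul, Matrix.one_mul, rowc, rowγ, cancelU]
        exact keyc.symm
      · -- G4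
        simp only [colV_neg, ← mul_colV, Matrix.mul_neg, Matrix.neg_mul,
          Matrix.mul_smul, Matrix.mul_one, Matrix.mul_assoc]
        rw [canc U dU, keyd]
        simp only [Matrix.mul_neg, Matrix.mul_smul, neg_neg]
        module
      · -- G5
        rw [Matrix.transpose_nonsing_inv]
        apply Matrix.inv_eq_left_inv
        simp only [Matrix.mul_assoc]
        rw [canc U dU, hsft, canc Uᵀ dUT, Matrix.nonsing_inv_mul _ dLT]
      · -- G6
        simp only [colV_neg, ← mul_colV, rowc, Matrix.mul_neg, Matrix.neg_mul,
          Matrix.mul_smul, Matrix.smul_mul, Matrix.mul_one, Matrix.mul_assoc]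
        rw [canc U dU, keyf]
        simp only [Matrix.mul_sub, Matrix.mul_neg, Matrix.mul_one, Matrix.mul_assoc]
        rw [keyc2]
        simp only [Matrix.mul_neg, Matrix.mul_smul, neg_neg]
        module
      · -- G7
        rw [hXT]
        simp only [colV_neg, ← mul_colV, Matrix.mul_neg]
        rw [← Matrix.mul_assoc L U, ← hLU, Matrix.mul_assoc, canc' S dS]
      · -- G8
        rw [hXT]
        exact hLU
      · -- G9
        rw [hXT, ← Matrix.mul_assoc, ← hLU, Matrix.mul_assoc,
          Matrix.mul_nonsing_inv _ dS, Matrix.mul_one]
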